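/- Let k_max be the largest k such that G has a nonempty k-core (a nonempty set C with deg_C(v) >= k for all v in C). Then the optimal density rho(S*) satisfies k_max/2 <= rho(S*) <= k_max; i.e., the main core is a 2-approximation to the densest subgraph in terms of density lower bound, and density cannot exceed the maximal core number. -/

import Mathlib

open Finset

variable {V : Type*} [Fintype V] [DecidableEq V]

/-- Number of edges of `G` with both endpoints in `S`. -/
def edgesIn (G : SimpleGraph V) [DecidableRel G.Adj] (S : Finset V) : ℕ :=
  (G.edgeFinset.filter (fun e => ∀ v ∈ e, v ∈ S)).card

/-- Internal degree of `v` in `S`: the number of neighbors of `v` inside `S`. -/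
def degIn (G : SimpleGraph V) [DecidableRel G.Adj] (S : Finset V) (v : V) : ℕ :=
  (G.neighborFinset v ∩ S).card

/-- Density of the subgraph induced by `S`: `|E(S)| / |S|`. -/
def density (G : SimpleGraph V) [DecidableRel G.Adj] (S : Finset V) : ℚ :=
  (edgesIn G S : ℚ) / (S.card : ℚ)

/-- Induced subgraph on a finset, as a graph on `V`. -/
def indG (G : SimpleGraph V) (S : Finset V) : SimpleGraph V where
  Adj a b := G.Adj a b ∧ a ∈ S ∧ b ∈ S
  symm := ⟨fun a b (h : G.Adj a b ∧ a ∈ S ∧ b ∈ S) => ⟨h.1.symm, h.2.2, h.2.1⟩⟩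
  loopless := ⟨fun a (h : G.Adj a a ∧ a ∈ S ∧ a ∈ S) => G.loopless.irrefl a h.1⟩

instance (G : SimpleGraph V) [DecidableRel G.Adj] (S : Finset V) :
    DecidableRel (indG G S).Adj := fun a b => instDecidableAnd

lemma edgeFinset_indG (G : SimpleGraph V) [DecidableRel G.Adj] (S : Finset V) :
    (indG G S).edgeFinset = G.edgeFinset.filter (fun e => ∀ v ∈ e, v ∈ S) := by
  ext e
  induction e with
  | _ a b =>
    simp only [SimpleGraph.mem_edgeFinset]
    simp [SimpleGraph.mem_edgeFinset, indG, Sym2.mem_iff]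

lemma edgesIn_eq (G : SimpleGraph V) [DecidableRel G.Adj] (S : Finset V) :
    edgesIn G S = (indG G S).edgeFinset.card := by
  rw [edgeFinset_indG]; rfl

lemma neighborFinset_indG (G : SimpleGraph V) [DecidableRel G.Adj] (S : Finset V) (v : V) :
    (indG G S).neighborFinset v = if v ∈ S then G.neighborFinset v ∩ S else ∅ := by
  ext w
  by_cases hv : v ∈ S <;> simp only [SimpleGraph.mem_neighborFinset] <;> simp [indG, SimpleGraph.mem_neighborFinset, hv] <;> tauto

lemma degree_indG (G : SimpleGraph V) [DecidableRel G.Adj] (S : Finset V) {v : V} (hv : v ∈ S) :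
    (indG G S).degree v = degIn G S v := by
  rw [SimpleGraph.degree, neighborFinset_indG, if_pos hv]; rfl

lemma handshake (G : SimpleGraph V) [DecidableRel G.Adj] (S : Finset V) :
    ∑ v ∈ S, degIn G S v = 2 * edgesIn G S := by
  rw [edgesIn_eq, ← SimpleGraph.sum_degrees_eq_twice_card_edges]
  rw [← Finset.sum_subset (Finset.subset_univ S)]
  · exact Finset.sum_congr rfl fun v hv => (degree_indG G S hv).symm
  · intro v _ hv
    rw [SimpleGraph.degree, neighborFinset_indG, if_neg hv, Finset.card_empty]

lemma edgesIn_erase (G : SimpleGraph V) [DecidableRel G.Adj] (S : Finset V) {v : V} (hv : v ∈ S) :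
    edgesIn G S = edgesIn G (S.erase v) + degIn G S v := by
  rw [edgesIn_eq, edgesIn_eq, ← degree_indG G S hv,
    ← SimpleGraph.card_incidenceFinset_eq_degree]
  rw [← Finset.card_filter_add_card_filter_not (s := (indG G S).edgeFinset)
    (p := fun e => v ∈ e), add_comm]
  congr 1
  swap
  · rw [SimpleGraph.incidenceFinset_eq_filter]
  congr 1
  ext e
  induction e with
  | _ a b =>
    simp only [Finset.mem_filter, SimpleGraph.mem_edgeFinset]
    simp [SimpleGraph.mem_edgeFinset, indG, Finset.mem_erase, Sym2.mem_iff]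
    push_neg
    constructor
    · rintro ⟨⟨hab, ha, hb⟩, hne⟩
      exact ⟨hab, ⟨Ne.symm hne.1, ha⟩, Ne.symm hne.2, hb⟩
    · rintro ⟨hab, ⟨hna, ha⟩, hnb, hb⟩
      exact ⟨⟨hab, ha, hb⟩, Ne.symm hna, Ne.symm hnb⟩

lemma core_exists (G : SimpleGraph V) [DecidableRel G.Adj] (q : ℚ) :
    ∀ S : Finset V, S.Nonempty → q ≤ density G S →
    ∃ C : Finset V, C.Nonempty ∧ ∀ v ∈ C, q ≤ (degIn G C v : ℚ) := by
  intro S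
  induction S using Finset.strongInductionOn with
  | _ S ih =>
    intro hne hq
    by_cases h : ∀ v ∈ S, q ≤ (degIn G S v : ℚ)
    · exact ⟨S, hne, h⟩
    · push_neg at h
      obtain ⟨v, hv, hd⟩ := h
      have herase := edgesIn_erase G S hv
      rcases Finset.eq_empty_or_nonempty (S.erase v) with he | hne'
      · -- S = {v}, so density = degIn, contradiction with hd
        exfalso
        have hcard : S.card = 1 := by
          have h1 := Finset.card_erase_of_mem hv
          have h2 : (S.erase v).card = 0 := by rw [he]; rfl
          have h3 := Finset.card_pos.mpr hne
          omega
        have hE0 : edgesIn G (S.erase v) = 0 := by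
          unfold edgesIn
          rw [Finset.card_eq_zero, Finset.filter_eq_empty_iff]
          intro e he'
          induction e with
          | _ a b =>
            intro hall
            have ha := hall a (Sym2.mem_mk_left a b)
            rw [he] at ha
            exact Finset.notMem_empty a ha
        have hE : edgesIn G S = degIn G S v := by omega
        rw [density, hE, hcard] at hq
        simp at hq
        exact absurd hq (not_le.mpr hd)
      · -- remove v, density doesn't decrease
        have hsub : S.erase v ⊂ S := Finset.erase_ssubset hv
        apply ih _ hsub hne'
        -- show q ≤ density G (S.erase v)
        have hn : (0 : ℚ) < (S.card : ℚ) := by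
          exact_mod_cast Finset.card_pos.mpr hne
        have hn2 : 2 ≤ S.card := by
          have := Finset.card_pos.mpr hne'
          have := Finset.card_erase_of_mem hv
          omega
        have hn1 : (0 : ℚ) < ((S.erase v).card : ℚ) := by
          exact_mod_cast Finset.card_pos.mpr hne'
        have hcard' : ((S.erase v).card : ℚ) = (S.card : ℚ) - 1 := by
          rw [Finset.card_erase_of_mem hv]
          have : 1 ≤ S.card := by omega
          push_cast [Nat.cast_sub this]
          ring
        have hdq : (degIn G S v : ℚ) * S.card < (edgesIn G S : ℚ) := by
          have h1 : (degIn G S v : ℚ) < (edgesIn G S : ℚ) / S.card :=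
            lt_of_lt_of_le hd hq
          calc (degIn G S v : ℚ) * S.card < ((edgesIn G S : ℚ) / S.card) * S.card :=
                by exact mul_lt_mul_of_pos_right h1 hn
            _ = (edgesIn G S : ℚ) := by field_simp
        refine le_trans hq ?_
        rw [density, density, div_le_div_iff₀ hn hn1, hcard']
        have hEe : (edgesIn G (S.erase v) : ℚ) = (edgesIn G S : ℚ) - (degIn G S v : ℚ) := by
          rw [herase]; push_cast; ring
        rw [hEe]
        nlinarith [hdq]

theorem main_core_two_approximation (G : SimpleGraph V) [DecidableRel G.Adj]
    (kmax : ℕ) (C0 : Finset V) (hC0 : C0.Nonempty)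
    (hC0core : ∀ v ∈ C0, kmax ≤ degIn G C0 v)
    (hkmax : ∀ (k : ℕ) (C : Finset V), C.Nonempty →
      (∀ v ∈ C, k ≤ degIn G C v) → k ≤ kmax)
    (Sstar : Finset V) (hne : Sstar.Nonempty)
    (hmax : ∀ S : Finset V, S.Nonempty → density G S ≤ density G Sstar) :
    (kmax : ℚ) / 2 ≤ density G Sstar ∧ density G Sstar ≤ (kmax : ℚ) := by
  constructor
  · -- lower bound via C0
    refine le_trans ?_ (hmax C0 hC0)
    have hh := handshake G C0
    have hsum : kmax * C0.card ≤ 2 * edgesIn G C0 := by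
      rw [← hh]
      calc kmax * C0.card = ∑ _v ∈ C0, kmax := by rw [Finset.sum_const, smul_eq_mul, mul_comm]
        _ ≤ ∑ v ∈ C0, degIn G C0 v := Finset.sum_le_sum hC0core
    have hc : (0 : ℚ) < (C0.card : ℚ) := by exact_mod_cast Finset.card_pos.mpr hC0
    rw [density, div_le_div_iff₀ (by norm_num : (0:ℚ) < 2) hc]
    have hcast : ((kmax * C0.card : ℕ) : ℚ) ≤ ((2 * edgesIn G C0 : ℕ) : ℚ) :=
      Nat.cast_le.mpr hsum
    push_cast at hcast
    linarith
  · -- upper bound via core_exists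
    obtain ⟨C, hCne, hCdeg⟩ := core_exists G (density G Sstar) Sstar hne (le_refl _)
    have hq0 : 0 ≤ density G Sstar := by
      unfold density
      positivity
    set k := ⌈density G Sstar⌉₊ with hk
    have hkC : ∀ v ∈ C, k ≤ degIn G C v := fun v hv => Nat.ceil_le.mpr (hCdeg v hv)
    have := hkmax k C hCne hkC
    calc density G Sstar ≤ (k : ℚ) := Nat.le_ceil _
      _ ≤ (kmax : ℚ) := by exact_mod_cast this
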